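/- Let θ > 0, ρ > 0, and λ ∈ (0,1). For every t > 0, the ρ-th power of the reduced GTLD density satisfies (θ e^{−t}(1 − e^{−t})^{θ−1}(1 + λ − 2λ(1 − e^{−t})^θ))^ρ = Σ_{j=0}^∞ θ^ρ (−1)^j C(ρ,j) (2λ)^j (1+λ)^{ρ−j} · Σ_{k=0}^∞ (−1)^k C(jθ + ρ(θ−1), k) · e^{−(k+ρ)t} (iterated sums; both the inner and outer series converge). With t = β g(x)^α this is the expansion f(x)^ρ = Σ_{j,k} w_{j,k} e^{−(k+ρ)β g(x)^α} (αβ g(x)^{α−1} g′(x))^ρ used for the Rényi entropy of the GTLD. -/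

import Mathlib

open Real Filter Topology

/-- Generalized binomial coefficient `C(a,k) = a(a−1)⋯(a−k+1)/k!`. -/
noncomputable def genChoose (a : ℝ) (k : ℕ) : ℝ :=
  (∏ i ∈ Finset.range k, (a - i)) / (Nat.factorial k)

lemma genChoose_zero (a : ℝ) : genChoose a 0 = 1 := by simp [genChoose]

lemma genChoose_succ (a : ℝ) (k : ℕ) :
    genChoose a (k + 1) = genChoose a k * ((a - k) / (k + 1)) := by
  have hfac : (((k + 1).factorial : ℝ)) = ((k : ℝ) + 1) * (k.factorial : ℝ) := by
    rw [Nat.factorial_succ]; push_cast; ring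
  rw [genChoose, genChoose, Finset.prod_range_succ, hfac, div_mul_div_comm,
    mul_comm ((k : ℝ) + 1) (k.factorial : ℝ)]

lemma summable_genChoose_weight (a : ℝ) {r : ℝ} (hr0 : 0 ≤ r) (hr : r < 1) :
    Summable (fun k : ℕ => |genChoose a k| * (|a| + k + 1) * r ^ k) := by
  rcases eq_or_lt_of_le hr0 with h0 | hrpos
  · apply summable_of_ne_finset_zero (s := {0})
    intro n hn
    simp only [Finset.mem_singleton] at hn
    simp [← h0, zero_pow hn]
  apply summable_of_ratio_norm_eventually_le (r := (1 + r) / 2) (by linarith)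
  have hq : Tendsto (fun n : ℕ =>
      |a - n| / (n + 1) * ((|a| + n + 2) / (|a| + n + 1)) * r) atTop (𝓝 r) := by
    have h1 : Tendsto (fun n : ℕ => |a - n| / ((n : ℝ) + 1)) atTop (𝓝 1) := by
      have hA : Tendsto (fun n : ℕ => ((n : ℝ) + 1)) atTop atTop :=
        tendsto_atTop_add_const_right _ 1 tendsto_natCast_atTop_atTop
      have h0 : Tendsto (fun n : ℕ => (a + 1) / ((n : ℝ) + 1)) atTop (𝓝 0) :=
        Tendsto.div_atTop tendsto_const_nhds hA
      have h2 : Tendsto (fun n : ℕ => 1 - (a + 1) / ((n : ℝ) + 1)) atTop (𝓝 (1 - 0)) :=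
        tendsto_const_nhds.sub h0
      rw [sub_zero] at h2
      apply h2.congr'
      filter_upwards [hA.eventually_ge_atTop (a + 1)] with n hn
      have hpos : (0 : ℝ) < (n : ℝ) + 1 := by positivity
      have he : |a - n| = (n : ℝ) - a := by
        rw [abs_sub_comm]; exact abs_of_nonneg (by linarith)
      rw [he]
      field_simp
      ring
    have h2 : Tendsto (fun n : ℕ => (|a| + n + 2) / (|a| + (n : ℝ) + 1)) atTop (𝓝 1) := by
      have hA : Tendsto (fun n : ℕ => (|a| + (n : ℝ) + 1)) atTop atTop := by
        apply tendsto_atTop_add_const_right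
        exact tendsto_atTop_add_const_left _ _ tendsto_natCast_atTop_atTop
      have h0 : Tendsto (fun n : ℕ => 1 / (|a| + (n : ℝ) + 1)) atTop (𝓝 0) :=
        Tendsto.div_atTop tendsto_const_nhds hA
      have h2 : Tendsto (fun n : ℕ => 1 + 1 / (|a| + (n : ℝ) + 1)) atTop (𝓝 (1 + 0)) :=
        tendsto_const_nhds.add h0
      rw [add_zero] at h2
      apply h2.congr
      intro n
      have hpos : (0 : ℝ) < |a| + (n : ℝ) + 1 := by positivity
      field_simp
      ring
    have := (h1.mul h2).mul (tendsto_const_nhds (x := r))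
    simpa using this
  filter_upwards [hq.eventually_lt_const (by linarith : r < (1 + r) / 2)] with n hn
  have hn1 : (0 : ℝ) < (n : ℝ) + 1 := by positivity
  have hw : (0 : ℝ) < |a| + (n : ℝ) + 1 := by positivity
  have hcn : |genChoose a (n + 1)| = |genChoose a n| * (|a - n| / ((n : ℝ) + 1)) := by
    rw [genChoose_succ, abs_mul, abs_div, abs_of_pos hn1]
  have hfn : (0 : ℝ) ≤ |genChoose a n| * (|a| + n + 1) * r ^ n := by positivity
  rw [Real.norm_eq_abs, Real.norm_eq_abs,
    abs_of_nonneg (by positivity : (0:ℝ) ≤ |genChoose a (n+1)| * (|a| + ((n:ℕ)+1 : ℕ) + 1) * r ^ (n+1)),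
    abs_of_nonneg hfn]
  have key : |genChoose a (n + 1)| * (|a| + ((n : ℕ) + 1 : ℕ) + 1) * r ^ (n + 1)
      = (|a - n| / (n + 1) * ((|a| + n + 2) / (|a| + n + 1)) * r)
        * (|genChoose a n| * (|a| + n + 1) * r ^ n) := by
    rw [hcn, pow_succ]
    push_cast
    field_simp
    ring
  rw [key]
  exact mul_le_mul_of_nonneg_right hn.le hfn

lemma summable_genChoose_mul_pow (a : ℝ) {x : ℝ} (hx : |x| < 1) :
    Summable (fun k : ℕ => genChoose a k * x ^ k) := by
  apply Summable.of_norm_bounded (summable_genChoose_weight a (abs_nonneg x) hx)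
  intro k
  rw [Real.norm_eq_abs, abs_mul, abs_pow]
  have h1 : (1 : ℝ) ≤ |a| + k + 1 := by
    have := abs_nonneg a
    have : (0:ℝ) ≤ (k:ℝ) := Nat.cast_nonneg k
    linarith [abs_nonneg a]
  nlinarith [abs_nonneg (genChoose a k), pow_nonneg (abs_nonneg x) k,
    mul_nonneg (abs_nonneg (genChoose a k)) (pow_nonneg (abs_nonneg x) k)]

lemma hasSum_genChoose (a : ℝ) {x : ℝ} (hx : |x| < 1) :
    HasSum (fun k : ℕ => genChoose a k * x ^ k) ((1 + x) ^ a) := by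
  set r : ℝ := (|x| + 1) / 2 with hr_def
  have hxr : |x| < r := by rw [hr_def]; linarith
  have hr0 : 0 < r := lt_of_le_of_lt (abs_nonneg x) hxr
  have hr1 : r < 1 := by rw [hr_def]; linarith
  set s : Set ℝ := Set.Ioo (-r) r with hs_def
  have hs_open : IsOpen s := isOpen_Ioo
  have hs_conn : IsPreconnected s := isPreconnected_Ioo
  have hxs : x ∈ s := by rw [hs_def]; exact abs_lt.1 hxr
  have h0s : (0 : ℝ) ∈ s := by
    rw [hs_def]; constructor
    · linarith
    · linarith
  have habs : ∀ y ∈ s, |y| < r := fun y hy => abs_lt.2 hy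
  set g : ℕ → ℝ → ℝ := fun n y => genChoose a n * y ^ n with hg_def
  set g' : ℕ → ℝ → ℝ := fun n y => genChoose a n * ((n : ℝ) * y ^ (n - 1)) with hg'_def
  set u : ℕ → ℝ := fun n => |genChoose a n| * (|a| + n + 1) * r ^ n / r with hu_def
  have hu : Summable u := (summable_genChoose_weight a hr0.le hr1).div_const r
  have hderiv : ∀ n y, y ∈ s → HasDerivAt (g n) (g' n y) y := by
    intro n y _
    exact (hasDerivAt_pow n y).const_mul (genChoose a n)
  have hbound : ∀ n y, y ∈ s → ‖g' n y‖ ≤ u n := by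
    intro n y hy
    rw [Real.norm_eq_abs, hg'_def, hu_def]
    simp only
    rw [abs_mul, abs_mul, abs_pow, Nat.abs_cast]
    cases n with
    | zero => simp; positivity
    | succ m =>
      have hu_eq : |genChoose a (m+1)| * (|a| + ((m:ℕ)+1 : ℕ) + 1) * r ^ (m + 1) / r
          = |genChoose a (m+1)| * ((|a| + (m : ℝ) + 2) * r ^ m) := by
        rw [pow_succ]
        push_cast
        field_simp
        ring
      rw [hu_eq]
      apply mul_le_mul_of_nonneg_left _ (abs_nonneg _)
      have h1 : |y| ^ (m + 1 - 1) ≤ r ^ m := by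
        simpa using pow_le_pow_left₀ (abs_nonneg y) (habs y hy).le m
      have h2 : ((m + 1 : ℕ) : ℝ) ≤ |a| + (m : ℝ) + 2 := by
        push_cast; linarith [abs_nonneg a]
      exact mul_le_mul h2 h1 (by positivity) (by positivity)
  have hg0 : Summable fun n => g n 0 := by
    apply summable_of_ne_finset_zero (s := {0})
    intro n hn
    simp only [Finset.mem_singleton] at hn
    simp [hg_def, zero_pow hn]
  set F : ℝ → ℝ := fun z => ∑' n, g n z with hF_def
  have hFderiv : ∀ y ∈ s, HasDerivAt F (∑' n, g' n y) y := fun y hy =>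
    hasDerivAt_tsum_of_isPreconnected hu hs_open hs_conn hderiv hbound h0s hg0 hy
  have key : ∀ y ∈ s, (1 + y) * (∑' n, g' n y) = a * F y := by
    intro y hy
    have hy1 : |y| < 1 := lt_trans (habs y hy) hr1
    have hFsum : HasSum (fun n => g n y) (F y) := (summable_genChoose_mul_pow a hy1).hasSum
    have hDsumm : Summable (fun n => g' n y) :=
      Summable.of_norm_bounded hu (fun n => hbound n y hy)
    have hDsum : HasSum (fun n => g' n y) (∑' n, g' n y) := hDsumm.hasSum
    have h1 : HasSum (fun n : ℕ => (n : ℝ) * genChoose a n * y ^ n) (y * ∑' n, g' n y) := by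
      have h := hDsum.mul_left y
      have e : (fun n => y * g' n y) = fun n : ℕ => (n : ℝ) * genChoose a n * y ^ n := by
        funext n
        cases n with
        | zero => simp [hg'_def]
        | succ m => simp only [hg'_def, pow_succ]; push_cast; ring_nf
      rw [e] at h
      exact h
    have h2 : HasSum (fun n : ℕ => (a - n) * genChoose a n * y ^ n) (∑' n, g' n y) := by
      have hshift : HasSum (fun n : ℕ => g' (n + 1) y) (∑' n, g' n y) := by
        refine (hasSum_nat_add_iff (f := fun n => g' n y) 1).2 ?_
        simpa [hg'_def] using hDsum
      have e : (fun n : ℕ => g' (n + 1) y) = fun n : ℕ => (a - n) * genChoose a n * y ^ n := by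
        funext n
        have hn1 : ((n : ℝ) + 1) ≠ 0 := by positivity
        simp only [hg'_def, genChoose_succ]
        push_cast
        field_simp
      rw [e] at hshift
      exact hshift
    have h3 : HasSum (fun n : ℕ => a * (genChoose a n * y ^ n)) (a * F y) := hFsum.mul_left a
    have h4 : HasSum (fun n : ℕ => (a - n) * genChoose a n * y ^ n)
        (a * F y - y * ∑' n, g' n y) := by
      have := h3.sub h1
      have e : (fun n : ℕ => a * (genChoose a n * y ^ n) - (n : ℝ) * genChoose a n * y ^ n)
          = fun n : ℕ => (a - n) * genChoose a n * y ^ n := by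
        funext n; ring
      rw [e] at this
      exact this
    have := h2.unique h4
    linarith
  -- constancy of F z * (1+z)^(-a)
  set G : ℝ → ℝ := fun z => F z * (1 + z) ^ (-a) with hG_def
  have hGderiv : ∀ y ∈ s, HasDerivAt G 0 y := by
    intro y hy
    have hy1 : 0 < 1 + y := by
      have := (habs y hy); rw [abs_lt] at this; linarith
    have hb : HasDerivAt (fun z : ℝ => 1 + z) 1 y := by
      simpa using (hasDerivAt_id y).const_add 1
    have hP := hb.rpow_const (p := -a) (Or.inl (ne_of_gt hy1))
    have := (hFderiv y hy).mul hP
    have hval : (∑' n, g' n y) * (1 + y) ^ (-a) + F y * (1 * -a * (1 + y) ^ (-a - 1)) = 0 := by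
      have hsplit : (1 + y) ^ (-a) = (1 + y) * (1 + y) ^ (-a - 1) := by
        conv_lhs => rw [show (-a : ℝ) = 1 + (-a - 1) from by ring]
        rw [rpow_add hy1, rpow_one]
      rw [hsplit]
      have hk := key y hy
      linear_combination ((1 + y) ^ (-a - 1)) * hk
    rw [hval] at this
    exact this
  have hGconst : G x = G 0 := by
    apply Convex.is_const_of_fderivWithin_eq_zero (convex_Ioo (-r) r)
      (fun y hy => ((hGderiv y hy).differentiableAt).differentiableWithinAt) _ hxs h0s
    intro y hy
    have h1 : fderivWithin ℝ G s y = fderiv ℝ G y :=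
      fderivWithin_of_isOpen hs_open hy
    rw [h1, (hGderiv y hy).hasFDerivAt.fderiv]
    ext
    simp
  have hF0 : F 0 = 1 := by
    have h : HasSum (fun n => g n 0) (1 : ℝ) := by
      have := hasSum_single (f := fun n => g n 0) 0 (fun b hb => by simp [hg_def, zero_pow hb])
      simpa [hg_def, genChoose_zero] using this
    exact h.tsum_eq
  have hx1 : 0 < 1 + x := by
    rw [abs_lt] at hx; linarith
  have hG0 : G 0 = 1 := by
    rw [hG_def]; simp [hF0]
  have hFx : F x = (1 + x) ^ a := by
    have h := hGconst.trans hG0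
    rw [hG_def] at h
    simp only at h
    have hne : (1 + x) ^ (-a) ≠ 0 := ne_of_gt (rpow_pos_of_pos hx1 _)
    have h2 : F x = ((1 + x) ^ (-a))⁻¹ := by
      field_simp at h ⊢
      linarith [h]
    rw [h2, ← Real.rpow_neg hx1.le, neg_neg]
  have := (summable_genChoose_mul_pow a hx).hasSum
  rw [show (∑' k : ℕ, genChoose a k * x ^ k) = F x from rfl, hFx] at this
  exact this


/-- Expansion of the `ρ`-th power of the reduced GTLD density used for the
Rényi entropy: for `t > 0`,
`(θ e^{−t}(1 − e^{−t})^{θ−1}(1 + λ − 2λ(1 − e^{−t})^θ))^ρ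
  = Σ_j θ^ρ (−1)^j C(ρ,j) (2λ)^j (1+λ)^{ρ−j} Σ_k (−1)^k C(jθ+ρ(θ−1),k) e^{−(k+ρ)t}`,
with both the inner and the outer series convergent. -/
theorem gtld_density_power_expansion (θ ρ lam t : ℝ)
    (hθ : 0 < θ) (hρ : 0 < ρ) (hlam : lam ∈ Set.Ioo (0 : ℝ) 1) (ht : 0 < t) :
    (∀ j : ℕ,
        Summable (fun k : ℕ =>
          (-1 : ℝ) ^ k * genChoose ((j : ℝ) * θ + ρ * (θ - 1)) k *
            Real.exp (-((k : ℝ) + ρ) * t))) ∧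
      HasSum
        (fun j : ℕ =>
          θ ^ ρ * (-1 : ℝ) ^ j * genChoose ρ j * (2 * lam) ^ j *
            (1 + lam) ^ (ρ - (j : ℝ)) *
            ∑' k : ℕ,
              (-1 : ℝ) ^ k * genChoose ((j : ℝ) * θ + ρ * (θ - 1)) k *
                Real.exp (-((k : ℝ) + ρ) * t))
        ((θ * Real.exp (-t) * (1 - Real.exp (-t)) ^ (θ - 1) *
            (1 + lam - 2 * lam * (1 - Real.exp (-t)) ^ θ)) ^ ρ) := by
  obtain ⟨hlam0, hlam1⟩ := hlam
  set u : ℝ := Real.exp (-t) with hu_def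
  have hu0 : 0 < u := Real.exp_pos _
  have hu1 : u < 1 := by
    rw [hu_def, Real.exp_lt_one_iff]
    linarith
  have h1u0 : 0 < 1 - u := by linarith
  have h1u1 : 1 - u < 1 := by linarith
  have hinner : ∀ j : ℕ, HasSum (fun k : ℕ =>
      (-1 : ℝ) ^ k * genChoose ((j : ℝ) * θ + ρ * (θ - 1)) k * Real.exp (-((k : ℝ) + ρ) * t))
      ((1 - u) ^ ((j : ℝ) * θ + ρ * (θ - 1)) * Real.exp (-(ρ * t))) := by
    intro j
    set aj : ℝ := (j : ℝ) * θ + ρ * (θ - 1) with haj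
    have hx : |(-u : ℝ)| < 1 := by rw [abs_neg, abs_of_pos hu0]; exact hu1
    have h := (hasSum_genChoose aj hx).mul_right (Real.exp (-(ρ * t)))
    have e : (fun k : ℕ => genChoose aj k * (-u) ^ k * Real.exp (-(ρ * t)))
        = fun k : ℕ => (-1 : ℝ) ^ k * genChoose aj k * Real.exp (-((k : ℝ) + ρ) * t) := by
      funext k
      have hpow : (-u) ^ k = (-1 : ℝ) ^ k * u ^ k := by
        rw [neg_pow]
      have hexp : Real.exp (-((k : ℝ) + ρ) * t) = u ^ k * Real.exp (-(ρ * t)) := by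
        rw [hu_def, ← Real.rpow_natCast (Real.exp (-t)) k, ← Real.exp_mul, ← Real.exp_add]
        congr 1
        ring
      rw [hpow, hexp]
      ring
    rw [show (1 + -u) = 1 - u from by ring] at h
    rw [e] at h
    exact h
  refine ⟨fun j => (hinner j).summable, ?_⟩
  set v : ℝ := (1 - u) ^ θ with hv_def
  have hv0 : 0 < v := rpow_pos_of_pos h1u0 _
  have hv1 : v < 1 := Real.rpow_lt_one h1u0.le h1u1 hθ
  have hlamp : 0 < 1 + lam := by linarith
  have h2lv : 2 * lam * v < 1 + lam := by nlinarith
  set y : ℝ := -(2 * lam * v / (1 + lam)) with hy_def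
  have hy : |y| < 1 := by
    rw [hy_def, abs_neg, abs_of_nonneg (by positivity), div_lt_one hlamp]
    exact h2lv
  set C : ℝ := θ ^ ρ * Real.exp (-(ρ * t)) * (1 - u) ^ (ρ * (θ - 1)) * (1 + lam) ^ ρ with hC_def
  have hbin := (hasSum_genChoose ρ hy).mul_left C
  have hterm : ∀ j : ℕ,
      θ ^ ρ * (-1 : ℝ) ^ j * genChoose ρ j * (2 * lam) ^ j * (1 + lam) ^ (ρ - (j : ℝ)) *
        ((1 - u) ^ ((j : ℝ) * θ + ρ * (θ - 1)) * Real.exp (-(ρ * t)))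
      = C * (genChoose ρ j * y ^ j) := by
    intro j
    have e1 : (1 - u) ^ ((j : ℝ) * θ + ρ * (θ - 1)) = v ^ j * (1 - u) ^ (ρ * (θ - 1)) := by
      rw [rpow_add h1u0, mul_comm (j : ℝ) θ, rpow_mul h1u0.le, rpow_natCast, hv_def]
    have e2 : (1 + lam) ^ (ρ - (j : ℝ)) = (1 + lam) ^ ρ / (1 + lam) ^ j := by
      rw [rpow_sub hlamp, rpow_natCast]
    have e3 : y ^ j = (-1 : ℝ) ^ j * ((2 * lam) ^ j * v ^ j / (1 + lam) ^ j) := by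
      rw [hy_def, neg_pow, div_pow, mul_pow]
    have hne : ((1 + lam) ^ j : ℝ) ≠ 0 := pow_ne_zero _ (ne_of_gt hlamp)
    rw [e1, e2, e3, hC_def]
    field_simp
  have hval : C * (1 + y) ^ ρ
      = (θ * u * (1 - u) ^ (θ - 1) * (1 + lam - 2 * lam * v)) ^ ρ := by
    have h1y : (1 : ℝ) + y = (1 + lam - 2 * lam * v) / (1 + lam) := by
      rw [hy_def]
      field_simp
      ring
    have hnum : (0 : ℝ) ≤ 1 + lam - 2 * lam * v := by linarith
    have hbase1 : (0 : ℝ) ≤ θ * u := by positivity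
    have hbase2 : (0 : ℝ) ≤ θ * u * (1 - u) ^ (θ - 1) := by positivity
    rw [h1y, div_rpow hnum hlamp.le, mul_rpow hbase2 hnum, mul_rpow hbase1 (by positivity),
      mul_rpow hθ.le hu0.le]
    have hup : u ^ ρ = Real.exp (-(ρ * t)) := by
      rw [hu_def, ← Real.exp_mul]
      congr 1
      ring
    have hmid : ((1 - u) ^ (θ - 1)) ^ ρ = (1 - u) ^ (ρ * (θ - 1)) := by
      rw [← rpow_mul h1u0.le, mul_comm]
    have hden : ((1 + lam) ^ ρ : ℝ) ≠ 0 := ne_of_gt (rpow_pos_of_pos hlamp _)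
    rw [hup, hmid, hC_def]
    field_simp
  rw [hval] at hbin
  have hfun : (fun j : ℕ =>
      θ ^ ρ * (-1 : ℝ) ^ j * genChoose ρ j * (2 * lam) ^ j * (1 + lam) ^ (ρ - (j : ℝ)) *
        ∑' k : ℕ, (-1 : ℝ) ^ k * genChoose ((j : ℝ) * θ + ρ * (θ - 1)) k *
          Real.exp (-((k : ℝ) + ρ) * t))
      = fun j : ℕ => C * (genChoose ρ j * y ^ j) := by
    funext j
    rw [(hinner j).tsum_eq]
    exact hterm j
  rw [hfun]
  exact hbin
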